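/- Let p > 1, and let f : (0,∞) → (0,∞) be continuously differentiable, strictly increasing and concave, such that the function x ↦ f(x)^{p−1} · f'(x) is decreasing. Then for all distinct x, y ∈ (0,∞), J_p(f(x), f(y)) ≤ f(A(x, y)), where A(x,y) = (x+y)/2 is the arithmetic mean. -/

import Mathlib

open Set

/-- The Alzer mean `J_p(a,b) = (p/(p+1)) * (a^(p+1) - b^(p+1))/(a^p - b^p)`
of distinct positive reals `a`, `b`, for `p ∉ {0, -1}`. -/
noncomputable def alzer (p a b : ℝ) : ℝ :=
  (p / (p + 1)) * ((a ^ (p + 1) - b ^ (p + 1)) / (a ^ p - b ^ p))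

lemma alzer_aux (p : ℝ) (hp : 1 < p)
    (f : ℝ → ℝ)
    (hpos : ∀ x ∈ Ioi (0 : ℝ), 0 < f x)
    (hder : ContDiffOn ℝ 1 f (Ioi 0))
    (hmono : StrictMonoOn f (Ioi 0))
    (hconc : ConcaveOn ℝ (Ioi 0) f)
    (hdec : AntitoneOn (fun x => f x ^ (p - 1) * deriv f x) (Ioi 0)) :
    ∀ x ∈ Ioi (0 : ℝ), ∀ y ∈ Ioi (0 : ℝ), y < x →
      (p / (p + 1)) * ((f x ^ (p + 1) - f y ^ (p + 1)) / (f x ^ p - f y ^ p))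
        ≤ f ((x + y) / 2) := by
  intro x hx y hy hxy
  have hx0 : (0:ℝ) < x := hx
  have hy0 : (0:ℝ) < y := hy
  set A : ℝ := (x + y) / 2 with hA
  have hyA : y < A := by simp only [hA]; linarith
  have hAx : A < x := by simp only [hA]; linarith
  have hA0 : (0:ℝ) < A := lt_trans hy0 hyA
  have hAmem : A ∈ Ioi (0:ℝ) := hA0
  have hsub : Icc y x ⊆ Ioi (0:ℝ) := fun u hu => lt_of_lt_of_le hy0 hu.1
  have hopen : IsOpen (Ioi (0:ℝ)) := isOpen_Ioi
  -- differentiability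
  have hdiff : ∀ u ∈ Ioi (0:ℝ), HasDerivAt f (deriv f u) u := by
    intro u hu
    exact ((hder.differentiableOn one_ne_zero).differentiableAt (hopen.mem_nhds hu)).hasDerivAt
  have hderiv_cont : ContinuousOn (deriv f) (Ioi 0) :=
    hder.continuousOn_deriv_of_isOpen hopen le_rfl
  have hfc : ContinuousOn f (Ioi 0) := hder.continuousOn
  -- nonnegativity of the derivative
  have hderiv_nonneg : ∀ u ∈ Ioi (0:ℝ), 0 ≤ deriv f u := by
    intro u hu
    have h1 : HasDerivWithinAt f (deriv f u) (Ioi u) u := (hdiff u hu).hasDerivWithinAt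
    rw [hasDerivWithinAt_iff_tendsto_slope] at h1
    have hset : Ioi u \ {u} = Ioi u := Set.diff_singleton_eq_self (by simp)
    rw [hset] at h1
    refine ge_of_tendsto h1 ?_
    filter_upwards [self_mem_nhdsWithin] with v hv
    have hv0 : v ∈ Ioi (0:ℝ) := Set.mem_Ioi.2 (lt_trans (Set.mem_Ioi.1 hu) (Set.mem_Ioi.1 hv))
    have hf1 : f u < f v := hmono hu hv0 hv
    have hvu : (0:ℝ) < v - u := by simp only [Set.mem_Ioi] at hv; linarith
    rw [slope_def_field]
    have hf2 : (0:ℝ) < f v - f u := by linarith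
    positivity
  set w : ℝ → ℝ := fun u => f u ^ (p - 1) * deriv f u with hw
  have hw_cont : ContinuousOn w (Ioi 0) :=
    (hfc.rpow_const fun u hu => Or.inl (hpos u hu).ne').mul hderiv_cont
  have hw_nonneg : ∀ u ∈ Ioi (0:ℝ), 0 ≤ w u := fun u hu =>
    mul_nonneg (Real.rpow_nonneg (hpos u hu).le _) (hderiv_nonneg u hu)
  -- Fundamental theorem of calculus computations
  have FTC : ∀ q : ℝ, ∫ u in y..x, deriv f u * q * f u ^ (q - 1)
      = f x ^ q - f y ^ q := by
    intro q
    apply intervalIntegral.integral_eq_sub_of_hasDerivAt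
    · intro u hu
      rw [uIcc_of_le hxy.le] at hu
      exact (hdiff u (hsub hu)).rpow_const (Or.inl (hpos u (hsub hu)).ne')
    · apply ContinuousOn.intervalIntegrable
      rw [uIcc_of_le hxy.le]
      exact ((hderiv_cont.mono hsub).mul continuousOn_const).mul
        ((hfc.mono hsub).rpow_const fun u hu => Or.inl (hpos u (hsub hu)).ne')
  have hIw : p * ∫ u in y..x, w u = f x ^ p - f y ^ p := by
    rw [← FTC p, ← intervalIntegral.integral_const_mul]
    congr 1; funext u; simp only [hw]; ring
  have hIfw : (p + 1) * ∫ u in y..x, f u * w u = f x ^ (p + 1) - f y ^ (p + 1) := by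
    rw [← FTC (p + 1), ← intervalIntegral.integral_const_mul]
    apply intervalIntegral.integral_congr
    intro u hu
    rw [uIcc_of_le hxy.le] at hu
    have h0 : (0:ℝ) < f u := hpos u (hsub hu)
    have e1 : f u ^ (p + 1 - 1) = f u * f u ^ (p - 1) := by
      rw [show p + 1 - 1 = 1 + (p - 1) by ring, Real.rpow_add h0, Real.rpow_one]
    simp only [hw]
    rw [e1]; ring
  -- integrability helpers
  have hintf : ∀ a b : ℝ, a ∈ Icc y x → b ∈ Icc y x →
      IntervalIntegrable f MeasureTheory.volume a b := fun a b ha hb =>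
    ContinuousOn.intervalIntegrable ((hfc.mono hsub).mono (uIcc_subset_Icc ha hb))
  have hintw : ∀ a b : ℝ, a ∈ Icc y x → b ∈ Icc y x →
      IntervalIntegrable w MeasureTheory.volume a b := fun a b ha hb =>
    ContinuousOn.intervalIntegrable ((hw_cont.mono hsub).mono (uIcc_subset_Icc ha hb))
  have hintfw : ∀ a b : ℝ, a ∈ Icc y x → b ∈ Icc y x →
      IntervalIntegrable (fun u => f u * w u) MeasureTheory.volume a b := fun a b ha hb =>
    ContinuousOn.intervalIntegrable
      (((hfc.mono hsub).mul (hw_cont.mono hsub)).mono (uIcc_subset_Icc ha hb))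
  have hintgw : ∀ a b : ℝ, a ∈ Icc y x → b ∈ Icc y x →
      IntervalIntegrable (fun u => (f A - f u) * w u) MeasureTheory.volume a b :=
    fun a b ha hb => ContinuousOn.intervalIntegrable
      (((continuousOn_const.sub (hfc.mono hsub)).mul (hw_cont.mono hsub)).mono
        (uIcc_subset_Icc ha hb))
  have hintgc : ∀ a b : ℝ, a ∈ Icc y x → b ∈ Icc y x →
      IntervalIntegrable (fun u => (f A - f u) * w A) MeasureTheory.volume a b :=
    fun a b ha hb => ContinuousOn.intervalIntegrable
      (((continuousOn_const.sub (hfc.mono hsub)).mul continuousOn_const).mono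
        (uIcc_subset_Icc ha hb))
  have hymem : y ∈ Icc y x := ⟨le_rfl, hxy.le⟩
  have hxmem : x ∈ Icc y x := ⟨hxy.le, le_rfl⟩
  have hAm : A ∈ Icc y x := ⟨hyA.le, hAx.le⟩
  -- Hermite–Hadamard: ∫ f ≤ (x - y) * f A
  have hint_refl : IntervalIntegrable (fun u => f (x + y - u)) MeasureTheory.volume y x := by
    apply ContinuousOn.intervalIntegrable
    apply hfc.comp (Continuous.continuousOn (by continuity))
    intro u hu
    rw [uIcc_of_le hxy.le] at hu
    exact Set.mem_Ioi.2 (by linarith [hu.2])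
  have HH : ∫ u in y..x, f u ≤ (x - y) * f A := by
    have refl : ∫ u in y..x, f (x + y - u) = ∫ u in y..x, f u := by
      have h := intervalIntegral.integral_comp_sub_left (a := y) (b := x) f (x + y)
      simpa using h
    have comb : ∫ u in y..x, (f u + f (x + y - u)) ≤ ∫ u in y..x, (2 * f A) := by
      apply intervalIntegral.integral_mono_on hxy.le
        ((hintf y x hymem hxmem).add hint_refl) intervalIntegrable_const
      intro u hu
      have hu1 : u ∈ Ioi (0:ℝ) := hsub hu
      have hu2 : x + y - u ∈ Ioi (0:ℝ) := Set.mem_Ioi.2 (by linarith [hu.2])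
      have hc := hconc.2 hu1 hu2 (by norm_num : (0:ℝ) ≤ 1/2)
        (by norm_num : (0:ℝ) ≤ 1/2) (by norm_num)
      have he : (1/2 : ℝ) • u + (1/2 : ℝ) • (x + y - u) = A := by
        simp only [smul_eq_mul, hA]; ring
      rw [he] at hc
      simp only [smul_eq_mul] at hc
      linarith
    rw [intervalIntegral.integral_add (hintf y x hymem hxmem) hint_refl, refl,
      intervalIntegral.integral_const, smul_eq_mul] at comb
    linarith
  -- Chebyshev-type step: ∫ f w ≤ f A * ∫ w
  have key : ∫ u in y..x, f u * w u ≤ f A * ∫ u in y..x, w u := by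
    have split : ∫ u in y..x, (f A - f u) * w u
        = (∫ u in y..A, (f A - f u) * w u) + ∫ u in A..x, (f A - f u) * w u :=
      (intervalIntegral.integral_add_adjacent_intervals
        (hintgw y A hymem hAm) (hintgw A x hAm hxmem)).symm
    have mono1 : ∫ u in y..A, (f A - f u) * w A ≤ ∫ u in y..A, (f A - f u) * w u := by
      apply intervalIntegral.integral_mono_on hyA.le (hintgc y A hymem hAm)
        (hintgw y A hymem hAm)
      intro u hu
      have huI : u ∈ Ioi (0:ℝ) := hsub ⟨hu.1, le_trans hu.2 hAx.le⟩
      have h1 : f u ≤ f A := hmono.monotoneOn huI hAmem hu.2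
      have h2 : w A ≤ w u := hdec huI hAmem hu.2
      exact mul_le_mul_of_nonneg_left h2 (by linarith)
    have mono2 : ∫ u in A..x, (f A - f u) * w A ≤ ∫ u in A..x, (f A - f u) * w u := by
      apply intervalIntegral.integral_mono_on hAx.le (hintgc A x hAm hxmem)
        (hintgw A x hAm hxmem)
      intro u hu
      have huI : u ∈ Ioi (0:ℝ) := lt_of_lt_of_le hA0 hu.1
      have h1 : f A ≤ f u := hmono.monotoneOn hAmem huI hu.1
      have h2 : w u ≤ w A := hdec hAmem huI hu.1
      exact mul_le_mul_of_nonpos_left h2 (by linarith)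
    have const_int : (∫ u in y..A, (f A - f u) * w A) + ∫ u in A..x, (f A - f u) * w A
        = ∫ u in y..x, (f A - f u) * w A :=
      intervalIntegral.integral_add_adjacent_intervals
        (hintgc y A hymem hAm) (hintgc A x hAm hxmem)
    have hconstpart : 0 ≤ ∫ u in y..x, (f A - f u) * w A := by
      have e : ∫ u in y..x, (f A - f u) * w A
          = ((x - y) * f A - ∫ u in y..x, f u) * w A := by
        rw [intervalIntegral.integral_mul_const,
          intervalIntegral.integral_sub intervalIntegrable_const (hintf y x hymem hxmem),
          intervalIntegral.integral_const, smul_eq_mul]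
      rw [e]
      exact mul_nonneg (by linarith) (hw_nonneg A hAmem)
    have hkey0 : 0 ≤ ∫ u in y..x, (f A - f u) * w u := by
      rw [split]
      linarith
    have lin : ∫ u in y..x, (f A - f u) * w u
        = f A * (∫ u in y..x, w u) - ∫ u in y..x, f u * w u := by
      rw [← intervalIntegral.integral_const_mul,
        ← intervalIntegral.integral_sub
          (by exact (hintw y x hymem hxmem).const_mul (f A)) (hintfw y x hymem hxmem)]
      congr 1; funext u; ring
    rw [lin] at hkey0
    linarith
  -- final assembly
  have hab : f y < f x := hmono hy hx hxy
  have hbpos : 0 < f y := hpos y hy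
  have hppos : (0:ℝ) < p := by linarith
  have hp1 : (0:ℝ) < p + 1 := by linarith
  have hDpos : 0 < f x ^ p - f y ^ p :=
    sub_pos.2 (Real.rpow_lt_rpow hbpos.le hab hppos)
  have hIwpos : 0 < ∫ u in y..x, w u := by
    by_contra h
    push_neg at h
    nlinarith
  rw [← hIfw, ← hIw]
  have e2 : (p / (p + 1)) * (((p + 1) * ∫ u in y..x, f u * w u)
      / (p * ∫ u in y..x, w u)) = (∫ u in y..x, f u * w u) / ∫ u in y..x, w u := by
    field_simp
  rw [e2, div_le_iff₀ hIwpos]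
  linarith

/-- Let `p > 1`. If `f : (0,∞) → (0,∞)` is continuously differentiable,
strictly increasing and concave, and `x ↦ f(x)^(p-1) * f'(x)` is decreasing,
then `J_p(f(x), f(y)) ≤ f(A(x,y))` for distinct `x, y > 0`,
where `A(x,y) = (x+y)/2`. -/
theorem alzer_le_arith_of_concave_increasing (p : ℝ) (hp : 1 < p)
    (f : ℝ → ℝ)
    (hpos : ∀ x ∈ Ioi (0 : ℝ), 0 < f x)
    (hder : ContDiffOn ℝ 1 f (Ioi 0))
    (hmono : StrictMonoOn f (Ioi 0))
    (hconc : ConcaveOn ℝ (Ioi 0) f)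
    (hdec : AntitoneOn (fun x => f x ^ (p - 1) * deriv f x) (Ioi 0)) :
    ∀ x ∈ Ioi (0 : ℝ), ∀ y ∈ Ioi (0 : ℝ), x ≠ y →
      alzer p (f x) (f y) ≤ f ((x + y) / 2) := by
  intro x hx y hy hne
  rcases lt_or_gt_of_ne hne with h | h
  · have haux := alzer_aux p hp f hpos hder hmono hconc hdec y hy x hx h
    have e : alzer p (f x) (f y)
        = (p / (p + 1)) * ((f y ^ (p + 1) - f x ^ (p + 1)) / (f y ^ p - f x ^ p)) := by
      unfold alzer
      rw [← neg_sub (f y ^ (p + 1)), ← neg_sub (f y ^ p), neg_div_neg_eq]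
    rw [e, show (x + y) / 2 = (y + x) / 2 by ring]
    exact haux
  · simpa [alzer] using alzer_aux p hp f hpos hder hmono hconc hdec x hx y hy h
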